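/- Let C be a real number with 0 < C < 1, α = 1/log(1/(1-C)), m ≥ 2 an integer and η ≥ 1/2 a real number. Let B ≥ 144/C² be a real number satisfying 4α·log(B/C) + 6 + (1/η)·log_{2m-1} B ≤ B. Then for every real B' ≥ B one has 4α·log(B'/C) + 6 + (1/η)·log_{2m-1} B' ≤ 2·√(B'·B). -/

import Mathlib

set_option maxHeartbeats 1000000 in


/-- **The iterative step inequality for the locality-of-cogrowth principle.**
For `0 < C < 1`, `α = 1/log(1/(1-C))`, `m ≥ 2`, `η ≥ 1/2` and `B ≥ 144/C²`
satisfying `4α·log(B/C) + 6 + (1/η)·log_{2m-1} B ≤ B`, every `B' ≥ B`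
satisfies `4α·log(B'/C) + 6 + (1/η)·log_{2m-1} B' ≤ 2√(B'B)`. -/
theorem iterative_step_inequality
    (C : ℝ) (hC0 : 0 < C) (hC1 : C < 1)
    (m : ℕ) (hm : 2 ≤ m) (η : ℝ) (hη : 1 / 2 ≤ η)
    (B : ℝ) (hB : 144 / C ^ 2 ≤ B)
    (hBineq : 4 * (1 / Real.log (1 / (1 - C))) * Real.log (B / C) + 6 +
        (1 / η) * Real.logb (2 * (m : ℝ) - 1) B ≤ B)
    (B' : ℝ) (hB' : B ≤ B') :
    4 * (1 / Real.log (1 / (1 - C))) * Real.log (B' / C) + 6 +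
        (1 / η) * Real.logb (2 * (m : ℝ) - 1) B' ≤
      2 * Real.sqrt (B' * B) := by
  have hB0 : (0:ℝ) < B := lt_of_lt_of_le (by positivity) hB
  have hB'0 : (0:ℝ) < B' := lt_of_lt_of_le hB0 hB'
  have hη0 : (0:ℝ) < η := lt_of_lt_of_le (by norm_num) hη
  have h1C : (0:ℝ) < 1 - C := by linarith
  have hlogpos : 0 < Real.log (1/(1-C)) := Real.log_pos (by rw [lt_div_iff₀ h1C]; linarith)
  -- α ≤ 1/C
  have hCle : C ≤ Real.log (1/(1-C)) := by
    rw [Real.log_div one_ne_zero (ne_of_gt h1C), Real.log_one, zero_sub]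
    have := Real.log_le_sub_one_of_pos h1C
    linarith
  have hα : 1 / Real.log (1/(1-C)) ≤ 1 / C := one_div_le_one_div_of_le hC0 hCle
  have hα0 : 0 ≤ 1 / Real.log (1/(1-C)) := le_of_lt (by positivity)
  -- log (2m-1) ≥ 1
  have hm3 : (3:ℝ) ≤ 2*(m:ℝ) - 1 := by
    have : (2:ℝ) ≤ (m:ℝ) := by exact_mod_cast hm
    linarith
  have hlog2m : 1 ≤ Real.log (2*(m:ℝ)-1) := by
    have h3 : Real.exp 1 < 3 := by
      have := Real.exp_one_lt_d9; linarith
    have h1 : 1 < Real.log 3 := by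
      rw [show (1:ℝ) = Real.log (Real.exp 1) by simp]
      exact Real.log_lt_log (Real.exp_pos 1) h3
    have h2 : Real.log 3 ≤ Real.log (2*(m:ℝ)-1) :=
      Real.log_le_log (by norm_num) hm3
    linarith
  set L : ℝ := Real.log B' - Real.log B with hLdef
  have hL0 : 0 ≤ L := by
    have := Real.log_le_log hB0 hB'
    simp [hLdef]; linarith
  -- split
  have hsplit : 4 * (1 / Real.log (1 / (1 - C))) * Real.log (B' / C) + 6 +
      (1 / η) * Real.logb (2 * (m : ℝ) - 1) B'
      = (4 * (1 / Real.log (1 / (1 - C))) * Real.log (B / C) + 6 +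
        (1 / η) * Real.logb (2 * (m : ℝ) - 1) B)
        + 4 * (1 / Real.log (1 / (1 - C))) * L
        + (1 / η) * (L / Real.log (2*(m:ℝ)-1)) := by
    simp only [Real.logb, Real.log_div (ne_of_gt hB'0) (ne_of_gt hC0),
       Real.log_div (ne_of_gt hB0) (ne_of_gt hC0), hLdef]
    ring
  -- increment bounds
  have hinc1 : 4 * (1 / Real.log (1 / (1 - C))) * L ≤ 4 / C * L := by
    have : 4 * (1 / Real.log (1 / (1 - C))) ≤ 4 * (1/C) := by linarith
    have := mul_le_mul_of_nonneg_right this hL0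
    calc 4 * (1 / Real.log (1 / (1 - C))) * L ≤ 4 * (1/C) * L := this
      _ = 4 / C * L := by ring
  have hinc2 : (1/η) * (L / Real.log (2*(m:ℝ)-1)) ≤ 2 / C * L := by
    have h1 : (1:ℝ)/η ≤ 2 := by
      rw [div_le_iff₀ hη0]; linarith
    have h2 : L / Real.log (2*(m:ℝ)-1) ≤ L := div_le_self hL0 hlog2m
    have h3 : 0 ≤ L / Real.log (2*(m:ℝ)-1) := by positivity
    have h4 : (1/η) * (L / Real.log (2*(m:ℝ)-1)) ≤ 2 * L :=
      mul_le_mul h1 h2 h3 (by norm_num)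
    have h5 : 2 * L ≤ 2 / C * L := by
      have : (2:ℝ) ≤ 2 / C := by
        rw [le_div_iff₀ hC0]; nlinarith
      exact mul_le_mul_of_nonneg_right this hL0
    linarith
  -- L ≤ 2 √B'/√B
  set s : ℝ := Real.sqrt B with hsdef
  set s' : ℝ := Real.sqrt B' with hs'def
  have hs0 : 0 < s := Real.sqrt_pos.mpr hB0
  have hs'0 : 0 < s' := Real.sqrt_pos.mpr hB'0
  have hss : s * s = B := Real.mul_self_sqrt hB0.le
  have hss' : s' * s' = B' := Real.mul_self_sqrt hB'0.le
  have hsle : s ≤ s' := Real.sqrt_le_sqrt hB'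
  have hLs : L ≤ 2 * (s' / s) := by
    have hq : (0:ℝ) < B'/B := div_pos hB'0 hB0
    have hLq : L = Real.log (B'/B) := by
      rw [Real.log_div (ne_of_gt hB'0) (ne_of_gt hB0)]
    have hsq : Real.log (B'/B) = 2 * Real.log (Real.sqrt (B'/B)) := by
      rw [Real.log_sqrt (le_of_lt hq)]; ring
    have hsub : Real.log (Real.sqrt (B'/B)) ≤ Real.sqrt (B'/B) := by
      have := Real.log_le_sub_one_of_pos (Real.sqrt_pos.mpr hq)
      linarith
    have hdiv : Real.sqrt (B'/B) = s' / s := Real.sqrt_div hB'0.le B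
    rw [hLq, hsq, hdiv]; linarith [hsub, hdiv ▸ hsub]
  -- (6/C) L ≤ s * s'
  have h12 : 12 / C ≤ B := by
    have hC2 : C^2 ≤ C := by nlinarith
    have : 144 / C ≤ 144 / C^2 := by
      apply div_le_div_of_nonneg_left (by norm_num) (by positivity) hC2
    have h12C : 12 / C ≤ 144 / C := by
      apply div_le_div_of_nonneg_right ?_ hC0.le <;> norm_num
    linarith
  have hmain : 6 / C * L ≤ s * s' := by
    have h1 : 6 / C * L ≤ 6 / C * (2 * (s'/s)) :=
      mul_le_mul_of_nonneg_left hLs (by positivity)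
    have h2 : 6 / C * (2 * (s'/s)) = (12 / C) * s' / s := by ring
    have h3 : (12 / C) * s' / s ≤ B * s' / s := by
      apply div_le_div_of_nonneg_right ?_ hs0.le
      exact mul_le_mul_of_nonneg_right h12 hs'0.le
    have h4 : B * s' / s = s * s' := by
      rw [← hss]; field_simp
    linarith [h2 ▸ h1, h4 ▸ h3]
  -- finish
  have hsqrt : Real.sqrt (B'*B) = s' * s := Real.sqrt_mul hB'0.le B
  have hBss' : B ≤ s * s' := by
    calc B = s * s := hss.symm
      _ ≤ s * s' := mul_le_mul_of_nonneg_left hsle hs0.le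
  rw [hsplit, hsqrt]
  have : 4 / C * L + 2 / C * L ≤ 6 / C * L := by ring_nf; linarith
  linarith [hBineq, hinc1, hinc2, hmain, hBss', this]
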